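/- With Φ(z) = (1/2)·[[z(1+z), z²(1−z)],[1−z, z(1+z)]] and Q(z,w) = (2w−z−z², 1−z)ᵀ, one has Φ(z)·Q(z,w) = w·Q(z,w) for all (z,w) ∈ ℂ² with (z−w)(z²−w) = 0. Moreover, the matrix Q(z) = [[−z−z², 2],[1−z, 0]] (so that Q(z,w) = Q(z)(1,w)ᵀ) is invertible for every z in the closed unit disk with z ≠ 1. -/

import Mathlib

theorem polynomial_eigenvector_example
    (Φ : ℂ → Matrix (Fin 2) (Fin 2) ℂ)
    (hΦ : ∀ z : ℂ, Φ z = (1/2 : ℂ) •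
      Matrix.of ![![z * (1 + z), z ^ 2 * (1 - z)], ![1 - z, z * (1 + z)]])
    (Q : ℂ → Matrix (Fin 2) (Fin 2) ℂ)
    (hQ : ∀ z : ℂ, Q z = Matrix.of ![![-z - z ^ 2, 2], ![1 - z, 0]]) :
    (∀ z w : ℂ, (Q z).mulVec ![1, w] = ![2 * w - z - z ^ 2, 1 - z]) ∧
    (∀ z w : ℂ, (z - w) * (z ^ 2 - w) = 0 →
      (Φ z).mulVec ![2 * w - z - z ^ 2, 1 - z] = w • ![2 * w - z - z ^ 2, 1 - z]) ∧
    (∀ z : ℂ, ‖z‖ ≤ 1 → z ≠ 1 → IsUnit (Q z)) := by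
  refine ⟨?_, ?_, ?_⟩
  · intro z w
    rw [hQ]
    funext i
    fin_cases i <;>
      simp [Matrix.mulVec, dotProduct, Fin.sum_univ_succ] <;> ring
  · intro z w h
    rw [hΦ]
    funext i
    fin_cases i <;>
      simp [Matrix.mulVec, dotProduct, Fin.sum_univ_succ] <;>
      first
        | linear_combination (-2:ℂ) * h
        | ring
  · intro z _ hz
    rw [hQ]
    apply (Matrix.isUnit_iff_isUnit_det _).mpr
    rw [Matrix.det_fin_two]
    simp only [Matrix.of_apply, Matrix.cons_val', Matrix.cons_val_zero,
      Matrix.cons_val_one, Matrix.head_cons, Matrix.empty_val',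
      Matrix.cons_val_fin_one, Matrix.head_fin_const]
    rw [isUnit_iff_ne_zero]
    have h1 : (1 : ℂ) - z ≠ 0 := sub_ne_zero.mpr (fun e => hz e.symm)
    intro hdet
    exact h1 (by linear_combination -(1/2 : ℂ) * hdet)
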